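/- Let G be a finitely generated torsion-free 2-step nilpotent group whose largest ring of scalars is ℤ. Then G cannot be written as an (internal) direct product H × K with both H and K non-abelian. -/

import Mathlib

/-- The commutator `[x,y] = x⁻¹y⁻¹xy`. -/
def grpComm {G : Type*} [Group G] (x y : G) : G := x⁻¹ * y⁻¹ * x * y

section

open scoped commutatorElement

lemma grpComm_mem_commutator {G : Type*} [Group G] (g h : G) :
    grpComm g h ∈ commutator G := by
  have : grpComm g h = ⁅g⁻¹, h⁻¹⁆ := by
    simp [grpComm, commutatorElement_def]
  rw [this, commutator_def]
  exact Subgroup.commutator_mem_commutator (Subgroup.mem_top _) (Subgroup.mem_top _)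

end

/-- Old Mathlib's `Monoid.IsTorsionFree` (removed): no nontrivial element has finite order. -/
def Monoid.IsTorsionFree (G : Type*) [Monoid G] : Prop :=
  ∀ g : G, g ≠ 1 → ¬IsOfFinOrder g

/-- `g` is centralizer-small: `C_G(g) = {gᵗz : t ∈ ℤ, z ∈ Z(G)}`. -/
def CSmall {G : Type*} [Group G] (g : G) : Prop :=
  ∀ x : G, x * g = g * x ↔ ∃ (t : ℤ) (z : G), z ∈ Subgroup.center G ∧ x = g ^ t * z

/-- `(R, σ, τ)` is a ring of scalars of `G`: the commutative unital ring `R`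
acts faithfully by endomorphisms (via `σ` on `G/Z(G)` and via `τ` on `G' `),
and the commutator pairing `G/Z(G) × G/Z(G) → G'` is `R`-bilinear. -/
def IsRingOfScalars (G : Type*) [Group G] (R : Type*) [CommRing R]
    (σ : R → G ⧸ Subgroup.center G → G ⧸ Subgroup.center G)
    (τ : R → commutator G → commutator G) : Prop :=
  (∀ r x y, σ r (x * y) = σ r x * σ r y) ∧
  (∀ r s x, σ (r + s) x = σ r x * σ s x) ∧
  (∀ r s x, σ (r * s) x = σ r (σ s x)) ∧
  (∀ x, σ 1 x = x) ∧
  (∀ r s, (∀ x, σ r x = σ s x) → r = s) ∧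
  (∀ r x y, τ r (x * y) = τ r x * τ r y) ∧
  (∀ r s x, τ (r + s) x = τ r x * τ s x) ∧
  (∀ r s x, τ (r * s) x = τ r (τ s x)) ∧
  (∀ x, τ 1 x = x) ∧
  (∀ r s, (∀ x, τ r x = τ s x) → r = s) ∧
  (∀ (r : R) (g g' h : G),
    σ r (g : G ⧸ Subgroup.center G) = (g' : G ⧸ Subgroup.center G) →
    τ r ⟨grpComm g h, grpComm_mem_commutator g h⟩ =
      ⟨grpComm g' h, grpComm_mem_commutator g' h⟩) ∧
  (∀ (r : R) (g h h' : G),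
    σ r (h : G ⧸ Subgroup.center G) = (h' : G ⧸ Subgroup.center G) →
    τ r ⟨grpComm g h, grpComm_mem_commutator g h⟩ =
      ⟨grpComm g h', grpComm_mem_commutator g h'⟩)


namespace StmtNine
open scoped commutatorElement
variable {G : Type*} [Group G]

lemma gc_eq (g h : G) : grpComm g h = ⁅g⁻¹, h⁻¹⁆ := by
  simp [grpComm, commutatorElement_def]

lemma gc_one_iff {x y : G} : grpComm x y = 1 ↔ x * y = y * x := by
  rw [gc_eq, commutatorElement_eq_one_iff_commute]
  constructor
  · intro h; have := h.inv_inv; simpa using this.eq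
  · intro h; exact Commute.inv_inv h

variable (h2 : ∀ x y z : G, grpComm x (grpComm y z) = 1)
include h2

lemma gc_central (y z : G) : grpComm y z ∈ Subgroup.center G := by
  rw [Subgroup.mem_center_iff]
  intro g
  exact gc_one_iff.mp (h2 g y z)

lemma gc_mul_left (a b y : G) :
    grpComm (a * b) y = grpComm a y * grpComm b y := by
  have key : grpComm (a * b) y = b⁻¹ * grpComm a y * y⁻¹ * b * y := by
    simp only [grpComm]; group
  have hc : b⁻¹ * grpComm a y = grpComm a y * b⁻¹ :=
    Subgroup.mem_center_iff.mp (gc_central h2 a y) b⁻¹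
  rw [key, hc]
  simp only [grpComm]; group

omit h2 in
lemma gc_one_left (y : G) : grpComm 1 y = 1 := by simp [grpComm]

lemma gc_inv_left (a y : G) : grpComm a⁻¹ y = (grpComm a y)⁻¹ := by
  have := gc_mul_left h2 a a⁻¹ y
  rw [mul_inv_cancel, gc_one_left] at this
  exact eq_inv_of_mul_eq_one_right this.symm

lemma gc_pow_left (a y : G) (n : ℕ) : grpComm (a ^ n) y = grpComm a y ^ n := by
  induction n with
  | zero => simpa using gc_one_left (G := G) y
  | succ n ih => rw [pow_succ, gc_mul_left h2, ih, pow_succ]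

lemma gc_zpow_left (a y : G) (n : ℤ) : grpComm (a ^ n) y = grpComm a y ^ n := by
  cases n with
  | ofNat n => simpa using gc_pow_left h2 a y n
  | negSucc n =>
      rw [zpow_negSucc, zpow_negSucc, gc_inv_left h2, gc_pow_left h2]

omit h2 in
lemma gc_swap (x y : G) : grpComm x y = (grpComm y x)⁻¹ := by
  rw [gc_eq, gc_eq, ← commutatorElement_inv]

lemma gc_mul_right (x a b : G) :
    grpComm x (a * b) = grpComm x a * grpComm x b := by
  rw [gc_swap, gc_mul_left h2, mul_inv_rev, gc_swap a x, gc_swap b x, inv_inv, inv_inv]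
  exact (Subgroup.mem_center_iff.mp (gc_central h2 x b) (grpComm x a)).symm

lemma gc_zpow_right (x a : G) (n : ℤ) : grpComm x (a ^ n) = grpComm x a ^ n := by
  rw [gc_swap, gc_zpow_left h2, gc_swap a x]
  simp

omit h2 in
lemma gc_central_left {z : G} (hz : z ∈ Subgroup.center G) (y : G) : grpComm z y = 1 := by
  rw [gc_one_iff]
  exact (Subgroup.mem_center_iff.mp hz y).symm

omit h2 in
lemma gc_central_right {z : G} (hz : z ∈ Subgroup.center G) (y : G) : grpComm y z = 1 := by
  rw [gc_one_iff]
  exact Subgroup.mem_center_iff.mp hz y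

omit h2 in
lemma tf_zpow (htf : Monoid.IsTorsionFree G) {g : G} {n : ℤ} (hn : n ≠ 0)
    (h : g ^ n = 1) : g = 1 := by
  by_contra hg
  refine htf g hg (isOfFinOrder_iff_pow_eq_one.mpr ⟨n.natAbs, by omega, ?_⟩)
  rcases Int.natAbs_eq n with h' | h'
  · rw [← zpow_natCast, ← h', h]
  · rw [← zpow_natCast, ← neg_neg (n.natAbs : ℤ), ← h', zpow_neg, h, inv_one]

end StmtNine

open scoped commutatorElement

/-- If the largest ring of scalars of a f.g. torsion-free 2-step nilpotent
group `G` is `ℤ` (i.e. every ring of scalars of `G` embeds into `ℤ`), then `G`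
is not an internal direct product of two non-abelian subgroups. -/
theorem stmt_9 (G : Type*) [Group G] [Group.FG G]
    (htf : Monoid.IsTorsionFree G)
    (h2 : ∀ x y z : G, grpComm x (grpComm y z) = 1)
    (hmax : ∀ (R : Type) (_ : CommRing R)
      (σ : R → G ⧸ Subgroup.center G → G ⧸ Subgroup.center G)
      (τ : R → commutator G → commutator G),
      IsRingOfScalars G R σ τ → ∃ f : R →+* ℤ, Function.Injective f) :
    ¬ ∃ H K : Subgroup G, H.Normal ∧ K.Normal ∧ H ⊓ K = ⊥ ∧ H ⊔ K = ⊤ ∧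
      (¬ ∀ x ∈ H, ∀ y ∈ H, x * y = y * x) ∧
      (¬ ∀ x ∈ K, ∀ y ∈ K, x * y = y * x) := by
  rintro ⟨H, K, hHn, hKn, hHK, hsup, hHna, hKna⟩
  -- elements of H and K commute
  have hbot : ∀ {g : G}, g ∈ H → g ∈ K → g = 1 := by
    intro g hgH hgK
    have : g ∈ H ⊓ K := ⟨hgH, hgK⟩
    rwa [hHK, Subgroup.mem_bot] at this
  have hcomm : ∀ {h k : G}, h ∈ H → k ∈ K → h * k = k * h := by
    intro h k hh hk
    have e1 : h⁻¹ * k⁻¹ * h * k ∈ H := by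
      have h1 : k⁻¹ * h * k⁻¹⁻¹ ∈ H := hHn.conj_mem h hh k⁻¹
      rw [inv_inv] at h1
      have := H.mul_mem (H.inv_mem hh) h1
      simpa [mul_assoc] using this
    have e2 : h⁻¹ * k⁻¹ * h * k ∈ K := by
      have h1 : h⁻¹ * k⁻¹ * h⁻¹⁻¹ ∈ K := hKn.conj_mem k⁻¹ (K.inv_mem hk) h⁻¹
      rw [inv_inv] at h1
      exact K.mul_mem h1 hk
    have : grpComm h k = 1 := hbot e1 e2
    exact StmtNine.gc_one_iff.mp this
  -- decomposition
  have hex : ∀ g : G, ∃ h k : G, h ∈ H ∧ k ∈ K ∧ g = h * k := by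
    intro g
    have hg : g ∈ (↑(H ⊔ K) : Set G) := by rw [hsup]; trivial
    rw [Subgroup.mul_normal H K] at hg
    obtain ⟨h, hh, k, hk, hhk⟩ := hg
    exact ⟨h, k, hh, hk, hhk.symm⟩
  choose dH dK hdH hdK hdEq using hex
  have huniq : ∀ {h1 k1 h1' k1' : G}, h1 ∈ H → k1 ∈ K → h1' ∈ H → k1' ∈ K →
      h1 * k1 = h1' * k1' → h1 = h1' ∧ k1 = k1' := by
    intro h1 k1 h1' k1' hh1 hk1 hh2 hk2 heq
    have e : h1'⁻¹ * h1 = k1' * k1⁻¹ := by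
      calc h1'⁻¹ * h1 = h1'⁻¹ * (h1 * k1) * k1⁻¹ := by group
      _ = h1'⁻¹ * (h1' * k1') * k1⁻¹ := by rw [heq]
      _ = k1' * k1⁻¹ := by group
    have m1 : h1'⁻¹ * h1 ∈ H := H.mul_mem (H.inv_mem hh2) hh1
    have m2 : h1'⁻¹ * h1 ∈ K := by rw [e]; exact K.mul_mem hk2 (K.inv_mem hk1)
    have hone : h1'⁻¹ * h1 = 1 := hbot m1 m2
    constructor
    · exact (inv_mul_eq_one.mp hone).symm
    · have : k1' * k1⁻¹ = 1 := by rw [← e, hone]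
      exact (mul_inv_eq_one.mp this).symm
  have hd_unique : ∀ {g h k : G}, h ∈ H → k ∈ K → g = h * k → dH g = h ∧ dK g = k := by
    intro g h k hh hk hgk
    exact huniq (hdH g) (hdK g) hh hk (by rw [← hdEq g, hgk])
  have hd_memH : ∀ {h : G}, h ∈ H → dH h = h ∧ dK h = 1 := fun hh =>
    hd_unique hh K.one_mem (by rw [mul_one])
  have hd_memK : ∀ {k : G}, k ∈ K → dH k = 1 ∧ dK k = k := fun hk =>
    hd_unique H.one_mem hk (by rw [one_mul])
  have hdmul : ∀ a b : G, dH (a * b) = dH a * dH b ∧ dK (a * b) = dK a * dK b := by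
    intro a b
    apply hd_unique (H.mul_mem (hdH a) (hdH b)) (K.mul_mem (hdK a) (hdK b))
    have hc : dK a * dH b = dH b * dK a := (hcomm (hdH b) (hdK a)).symm
    calc a * b = dH a * dK a * (dH b * dK b) := by rw [← hdEq a, ← hdEq b]
    _ = dH a * (dK a * dH b) * dK b := by group
    _ = dH a * (dH b * dK a) * dK b := by rw [hc]
    _ = dH a * dH b * (dK a * dK b) := by group
  -- projections preserve the center
  have hdcent : ∀ {z : G}, z ∈ Subgroup.center G →
      dH z ∈ Subgroup.center G ∧ dK z ∈ Subgroup.center G := by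
    intro z hz
    have hzc := Subgroup.mem_center_iff.mp hz
    have key : ∀ {h : G}, h ∈ H → h * dH z = dH z * h := by
      intro h hh
      have e1 : dH z * dK z * h = h * (dH z * dK z) := by
        rw [← hdEq z]; exact (hzc h).symm
      have step : dH z * h * dK z = h * dH z * dK z := by
        calc dH z * h * dK z = dH z * (h * dK z) := by rw [mul_assoc]
        _ = dH z * (dK z * h) := by rw [hcomm hh (hdK z)]
        _ = dH z * dK z * h := by rw [mul_assoc]
        _ = h * (dH z * dK z) := e1
        _ = h * dH z * dK z := by rw [mul_assoc]
      exact (mul_right_cancel step).symm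
    have hH : dH z ∈ Subgroup.center G := by
      rw [Subgroup.mem_center_iff]
      intro g
      have c1 : Commute (dH g) (dH z) := key (hdH g)
      have c2 : Commute (dK g) (dH z) := (hcomm (hdH z) (hdK g)).symm
      have c3 : Commute (dH g * dK g) (dH z) := c1.mul_left c2
      calc g * dH z = dH g * dK g * dH z := by
            conv_lhs => rw [hdEq g]
      _ = dH z * (dH g * dK g) := c3.eq
      _ = dH z * g := by rw [← hdEq g]
    refine ⟨hH, ?_⟩
    have : dK z = (dH z)⁻¹ * z := by
      rw [eq_inv_mul_iff_mul_eq]; exact (hdEq z).symm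
    rw [this]
    exact (Subgroup.center G).mul_mem ((Subgroup.center G).inv_mem hH) hz
  -- group homomorphisms
  let πH : G →* G := MonoidHom.mk' dH (fun a b => (hdmul a b).1)
  let πK : G →* G := MonoidHom.mk' dK (fun a b => (hdmul a b).2)
  have hπHval : ∀ g : G, πH g = dH g := fun _ => rfl
  have hπKval : ∀ g : G, πK g = dK g := fun _ => rfl
  -- commutator subgroup facts
  have hcommcent : ∀ {c : G}, c ∈ commutator G → c ∈ Subgroup.center G := by
    have hle : commutator G ≤ Subgroup.center G := by
      rw [commutator_def, Subgroup.commutator_le]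
      intro g1 _ g2 _
      have e : ⁅g1, g2⁆ = grpComm g1⁻¹ g2⁻¹ := by rw [StmtNine.gc_eq]; simp
      rw [e]; exact StmtNine.gc_central h2 _ _
    exact fun {c} hc => hle hc
  have hπHcomm : ∀ {c : G}, c ∈ commutator G → dH c ∈ commutator G := by
    have hle : Subgroup.map πH (commutator G) ≤ commutator G := by
      rw [commutator_def, Subgroup.map_commutator]
      exact Subgroup.commutator_mono le_top le_top
    intro c hc
    exact hle (Subgroup.mem_map_of_mem πH hc)
  have hπKcomm : ∀ {c : G}, c ∈ commutator G → dK c ∈ commutator G := by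
    have hle : Subgroup.map πK (commutator G) ≤ commutator G := by
      rw [commutator_def, Subgroup.map_commutator]
      exact Subgroup.commutator_mono le_top le_top
    intro c hc
    exact hle (Subgroup.mem_map_of_mem πK hc)
  -- quotient maps
  let mapH : G ⧸ Subgroup.center G →* G ⧸ Subgroup.center G :=
    QuotientGroup.map _ _ πH (fun z hz => by
      exact (hdcent hz).1)
  let mapK : G ⧸ Subgroup.center G →* G ⧸ Subgroup.center G :=
    QuotientGroup.map _ _ πK (fun z hz => by
      exact (hdcent hz).2)
  have hmapH : ∀ g : G, mapH (g : G ⧸ Subgroup.center G) = ((dH g : G) : G ⧸ Subgroup.center G) :=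
    fun g => rfl
  have hmapK : ∀ g : G, mapK (g : G ⧸ Subgroup.center G) = ((dK g : G) : G ⧸ Subgroup.center G) :=
    fun g => rfl
  -- quotient is commutative
  have qc : ∀ a b : G ⧸ Subgroup.center G, Commute a b := by
    intro a b
    induction a using QuotientGroup.induction_on with | _ g =>
    induction b using QuotientGroup.induction_on with | _ g' =>
    show ((g : G ⧸ Subgroup.center G) * g' = g' * g)
    rw [← QuotientGroup.mk_mul, ← QuotientGroup.mk_mul]
    apply QuotientGroup.eq.mpr
    have e : (g * g')⁻¹ * (g' * g) = grpComm g g' * grpComm g' g * (grpComm g g')⁻¹ := by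
      simp only [grpComm]; group
    rw [e]
    exact Subgroup.mul_mem _ (Subgroup.mul_mem _ (StmtNine.gc_central h2 g g') (StmtNine.gc_central h2 g' g))
      (Subgroup.inv_mem _ (StmtNine.gc_central h2 g g'))
  -- idempotency relations on the quotient
  have hHH : ∀ x : G ⧸ Subgroup.center G, mapH (mapH x) = mapH x := by
    intro x
    induction x using QuotientGroup.induction_on with | _ g =>
    rw [hmapH, hmapH, (hd_memH (hdH g)).1]
  have hKK : ∀ x : G ⧸ Subgroup.center G, mapK (mapK x) = mapK x := by
    intro x
    induction x using QuotientGroup.induction_on with | _ g =>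
    rw [hmapK, hmapK, (hd_memK (hdK g)).2]
  have hHK0 : ∀ x : G ⧸ Subgroup.center G, mapH (mapK x) = 1 := by
    intro x
    induction x using QuotientGroup.induction_on with | _ g =>
    rw [hmapK, hmapH, (hd_memK (hdK g)).1, QuotientGroup.mk_one]
  have hKH0 : ∀ x : G ⧸ Subgroup.center G, mapK (mapH x) = 1 := by
    intro x
    induction x using QuotientGroup.induction_on with | _ g =>
    rw [hmapH, hmapK, (hd_memH (hdH g)).2, QuotientGroup.mk_one]
  have hsum : ∀ x : G ⧸ Subgroup.center G, mapH x * mapK x = x := by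
    intro x
    induction x using QuotientGroup.induction_on with | _ g =>
    rw [hmapH, hmapK, ← QuotientGroup.mk_mul, ← hdEq g]
  -- the candidate ring of scalars
  set σ : ℤ × ℤ → (G ⧸ Subgroup.center G) → G ⧸ Subgroup.center G :=
    fun r x => mapH x ^ r.1 * mapK x ^ r.2 with hσdef
  have hτmem : ∀ (r : ℤ × ℤ) (c : commutator G),
      dH (c : G) ^ r.1 * dK (c : G) ^ r.2 ∈ commutator G := fun r c =>
    (commutator G).mul_mem ((commutator G).zpow_mem (hπHcomm c.2) r.1)
      ((commutator G).zpow_mem (hπKcomm c.2) r.2)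
  set τ : ℤ × ℤ → commutator G → commutator G :=
    fun r c => ⟨dH (c : G) ^ r.1 * dK (c : G) ^ r.2, hτmem r c⟩ with hτdef
  -- witnesses of noncommutativity
  push_neg at hHna hKna
  obtain ⟨x₁, hx₁, y₁, hy₁, hxy₁⟩ := hHna
  obtain ⟨x₂, hx₂, y₂, hy₂, hxy₂⟩ := hKna
  have hgc₁ : grpComm x₁ y₁ ≠ 1 := fun h => hxy₁ (StmtNine.gc_one_iff.mp h)
  have hgc₂ : grpComm x₂ y₂ ≠ 1 := fun h => hxy₂ (StmtNine.gc_one_iff.mp h)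
  have hdmulH : ∀ a b : G, dH (a * b) = dH a * dH b := fun a b => (hdmul a b).1
  have hdmulK : ∀ a b : G, dK (a * b) = dK a * dK b := fun a b => (hdmul a b).2
  have hdinvH : ∀ u : G, dH u⁻¹ = (dH u)⁻¹ := fun u => map_inv πH u
  have hdinvK : ∀ u : G, dK u⁻¹ = (dK u)⁻¹ := fun u => map_inv πK u
  have hdzpowH : ∀ (u : G) (n : ℤ), dH (u ^ n) = dH u ^ n := fun u n => map_zpow πH u n
  have hdzpowK : ∀ (u : G) (n : ℤ), dK (u ^ n) = dK u ^ n := fun u n => map_zpow πK u n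
  have ccmt : ∀ {u : G}, u ∈ Subgroup.center G → ∀ v : G, Commute v u :=
    fun hu v => Subgroup.mem_center_iff.mp hu v
  have hcent4 : ∀ c : commutator G,
      dH (c : G) ∈ Subgroup.center G ∧ dK (c : G) ∈ Subgroup.center G :=
    fun c => hdcent (hcommcent c.2)
  have eH : ∀ u v : G, dH (grpComm u v) = grpComm (dH u) (dH v) := by
    intro u v
    simp only [grpComm, hdmulH, hdinvH]
  have eK : ∀ u v : G, dK (grpComm u v) = grpComm (dK u) (dK v) := by
    intro u v
    simp only [grpComm, hdmulK, hdinvK]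
  have crossH : ∀ u v : G, grpComm (dH u) v = grpComm (dH u) (dH v) := by
    intro u v
    conv_lhs => rw [hdEq v]
    rw [StmtNine.gc_mul_right h2, StmtNine.gc_one_iff.mpr (hcomm (hdH u) (hdK v)), mul_one]
  have crossK : ∀ u v : G, grpComm (dK u) v = grpComm (dK u) (dK v) := by
    intro u v
    conv_lhs => rw [hdEq v]
    rw [StmtNine.gc_mul_right h2, StmtNine.gc_one_iff.mpr (hcomm (hdH v) (hdK u)).symm, one_mul]
  have crossH' : ∀ u v : G, grpComm u (dH v) = grpComm (dH u) (dH v) := by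
    intro u v
    conv_lhs => rw [hdEq u]
    rw [StmtNine.gc_mul_left h2, StmtNine.gc_one_iff.mpr (hcomm (hdH v) (hdK u)).symm, mul_one]
  have crossK' : ∀ u v : G, grpComm u (dK v) = grpComm (dK u) (dK v) := by
    intro u v
    conv_lhs => rw [hdEq u]
    rw [StmtNine.gc_mul_left h2, StmtNine.gc_one_iff.mpr (hcomm (hdH u) (hdK v)), one_mul]
  have hros : IsRingOfScalars G (ℤ × ℤ) σ τ := by
    refine ⟨?_, ?_, ?_, ?_, ?_, ?_, ?_, ?_, ?_, ?_, ?_, ?_⟩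
    -- σ multiplicative
    · intro r x y
      simp only [hσdef, map_mul]
      rw [(qc (mapH x) (mapH y)).mul_zpow, (qc (mapK x) (mapK y)).mul_zpow]
      exact Commute.mul_mul_mul_comm (qc _ _) _ _
    -- σ additive in r
    · intro r s x
      simp only [hσdef, Prod.fst_add, Prod.snd_add]
      rw [zpow_add, zpow_add]
      exact Commute.mul_mul_mul_comm (qc _ _) _ _
    -- σ multiplicative in r
    · intro r s x
      simp only [hσdef, Prod.fst_mul, Prod.snd_mul, map_mul, map_zpow, hHH, hHK0, hKH0, hKK,
        one_zpow, mul_one, one_mul, ← zpow_mul]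
      rw [mul_comm r.1 s.1, mul_comm r.2 s.2]
    -- σ unital
    · intro x
      simp only [hσdef, Prod.fst_one, Prod.snd_one, zpow_one]
      exact hsum x
    -- σ faithful
    · intro r s hrs
      have e1 : r.1 = s.1 := by
        have h := hrs ((x₁ : G) : G ⧸ Subgroup.center G)
        simp only [hσdef] at h
        rw [hmapH, hmapK, (hd_memH hx₁).1, (hd_memH hx₁).2] at h
        simp only [QuotientGroup.mk_one, one_zpow, mul_one, ← QuotientGroup.mk_zpow] at h
        have hz : (x₁ ^ r.1)⁻¹ * x₁ ^ s.1 ∈ Subgroup.center G := QuotientGroup.eq.mp h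
        have hz' : x₁ ^ (s.1 - r.1) ∈ Subgroup.center G := by
          have e : x₁ ^ (s.1 - r.1) = (x₁ ^ r.1)⁻¹ * x₁ ^ s.1 := by
            rw [sub_eq_neg_add, zpow_add, zpow_neg]
          rw [e]; exact hz
        by_contra hne
        have h1 : grpComm (x₁ ^ (s.1 - r.1)) y₁ = 1 := StmtNine.gc_central_left hz' y₁
        rw [StmtNine.gc_zpow_left h2] at h1
        exact hgc₁ (StmtNine.tf_zpow htf (by omega) h1)
      have e2 : r.2 = s.2 := by
        have h := hrs ((x₂ : G) : G ⧸ Subgroup.center G)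
        simp only [hσdef] at h
        rw [hmapH, hmapK, (hd_memK hx₂).1, (hd_memK hx₂).2] at h
        simp only [QuotientGroup.mk_one, one_zpow, one_mul, ← QuotientGroup.mk_zpow] at h
        have hz : (x₂ ^ r.2)⁻¹ * x₂ ^ s.2 ∈ Subgroup.center G := QuotientGroup.eq.mp h
        have hz' : x₂ ^ (s.2 - r.2) ∈ Subgroup.center G := by
          have e : x₂ ^ (s.2 - r.2) = (x₂ ^ r.2)⁻¹ * x₂ ^ s.2 := by
            rw [sub_eq_neg_add, zpow_add, zpow_neg]
          rw [e]; exact hz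
        by_contra hne
        have h1 : grpComm (x₂ ^ (s.2 - r.2)) y₂ = 1 := StmtNine.gc_central_left hz' y₂
        rw [StmtNine.gc_zpow_left h2] at h1
        exact hgc₂ (StmtNine.tf_zpow htf (by omega) h1)
      exact Prod.ext e1 e2
    -- τ multiplicative
    · intro r c d
      apply Subtype.ext
      simp only [hτdef, Subgroup.coe_mul, hdmulH, hdmulK]
      rw [(ccmt (hcent4 d).1 _).mul_zpow, (ccmt (hcent4 d).2 _).mul_zpow]
      exact Commute.mul_mul_mul_comm
        (ccmt ((Subgroup.center G).zpow_mem (hcent4 c).2 r.2) _) _ _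
    -- τ additive in r
    · intro r s c
      apply Subtype.ext
      simp only [hτdef, Subgroup.coe_mul, Prod.fst_add, Prod.snd_add]
      rw [zpow_add, zpow_add]
      exact Commute.mul_mul_mul_comm
        (ccmt ((Subgroup.center G).zpow_mem (hcent4 c).2 r.2) _) _ _
    -- τ multiplicative in r
    · intro r s c
      apply Subtype.ext
      simp only [hτdef, Prod.fst_mul, Prod.snd_mul, hdmulH, hdmulK, hdzpowH, hdzpowK,
        (hd_memH (hdH (c : G))).1, (hd_memH (hdH (c : G))).2,
        (hd_memK (hdK (c : G))).1, (hd_memK (hdK (c : G))).2,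
        one_zpow, mul_one, one_mul, ← zpow_mul]
      rw [mul_comm r.1 s.1, mul_comm r.2 s.2]
    -- τ unital
    · intro c
      apply Subtype.ext
      simp only [hτdef, Prod.fst_one, Prod.snd_one, zpow_one]
      exact (hdEq (c : G)).symm
    -- τ faithful
    · intro r s hrs
      have e1 : r.1 = s.1 := by
        have h := congrArg Subtype.val (hrs ⟨grpComm x₁ y₁, grpComm_mem_commutator x₁ y₁⟩)
        simp only [hτdef] at h
        have hmem : grpComm x₁ y₁ ∈ H := by
          simp only [grpComm]
          exact H.mul_mem (H.mul_mem (H.mul_mem (H.inv_mem hx₁) (H.inv_mem hy₁)) hx₁) hy₁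
        rw [(hd_memH hmem).1, (hd_memH hmem).2] at h
        simp only [one_zpow, mul_one] at h
        by_contra hne
        have h1 : grpComm x₁ y₁ ^ (r.1 - s.1) = 1 := by
          rw [sub_eq_add_neg, zpow_add, zpow_neg, h, mul_inv_cancel]
        exact hgc₁ (StmtNine.tf_zpow htf (by omega) h1)
      have e2 : r.2 = s.2 := by
        have h := congrArg Subtype.val (hrs ⟨grpComm x₂ y₂, grpComm_mem_commutator x₂ y₂⟩)
        simp only [hτdef] at h
        have hmem : grpComm x₂ y₂ ∈ K := by
          simp only [grpComm]
          exact K.mul_mem (K.mul_mem (K.mul_mem (K.inv_mem hx₂) (K.inv_mem hy₂)) hx₂) hy₂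
        rw [(hd_memK hmem).1, (hd_memK hmem).2] at h
        simp only [one_zpow, one_mul] at h
        by_contra hne
        have h1 : grpComm x₂ y₂ ^ (r.2 - s.2) = 1 := by
          rw [sub_eq_add_neg, zpow_add, zpow_neg, h, mul_inv_cancel]
        exact hgc₂ (StmtNine.tf_zpow htf (by omega) h1)
      exact Prod.ext e1 e2
    -- compatibility in the first argument
    · intro r g g' h hσr
      simp only [hσdef] at hσr
      rw [hmapH, hmapK, ← QuotientGroup.mk_zpow, ← QuotientGroup.mk_zpow,
        ← QuotientGroup.mk_mul] at hσr
      have hzc : (dH g ^ r.1 * dK g ^ r.2)⁻¹ * g' ∈ Subgroup.center G :=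
        QuotientGroup.eq.mp hσr
      have hg' : g' = dH g ^ r.1 * dK g ^ r.2 * ((dH g ^ r.1 * dK g ^ r.2)⁻¹ * g') := by
        group
      apply Subtype.ext
      simp only [hτdef]
      rw [eH, eK, hg', StmtNine.gc_mul_left h2, StmtNine.gc_central_left hzc, mul_one, StmtNine.gc_mul_left h2,
        StmtNine.gc_zpow_left h2, StmtNine.gc_zpow_left h2, crossH g h, crossK g h]
    -- compatibility in the second argument
    · intro r g h h' hσr
      simp only [hσdef] at hσr
      rw [hmapH, hmapK, ← QuotientGroup.mk_zpow, ← QuotientGroup.mk_zpow,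
        ← QuotientGroup.mk_mul] at hσr
      have hzc : (dH h ^ r.1 * dK h ^ r.2)⁻¹ * h' ∈ Subgroup.center G :=
        QuotientGroup.eq.mp hσr
      have hh' : h' = dH h ^ r.1 * dK h ^ r.2 * ((dH h ^ r.1 * dK h ^ r.2)⁻¹ * h') := by
        group
      apply Subtype.ext
      simp only [hτdef]
      rw [eH, eK, hh', StmtNine.gc_mul_right h2, StmtNine.gc_central_right hzc, mul_one, StmtNine.gc_mul_right h2,
        StmtNine.gc_zpow_right h2, StmtNine.gc_zpow_right h2, crossH' g h, crossK' g h]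
  obtain ⟨f, hf⟩ := hmax (ℤ × ℤ) inferInstance σ τ hros
  have hzero : ((1, 0) : ℤ × ℤ) * (0, 1) = 0 := by
    ext <;> simp
  have hmul := map_mul f (1, 0) (0, 1)
  rw [hzero, map_zero] at hmul
  rcases mul_eq_zero.mp hmul.symm with h | h
  · have : ((1, 0) : ℤ × ℤ) = 0 := hf (by rw [h, map_zero])
    simpa [Prod.ext_iff] using this
  · have : ((0, 1) : ℤ × ℤ) = 0 := hf (by rw [h, map_zero])
    simpa [Prod.ext_iff] using this
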